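/- For non-negative integers n, k with k ≤ n and any integer q ≥ 2, the Gaussian binomial coefficient satisfies [n choose k]_q ≤ (7/2) q^(k(n-k)); moreover if q ≥ 3 then [n choose k]_q ≤ 2 q^(k(n-k)). -/

import Mathlib

/-- The Gaussian binomial coefficient `[n choose k]_q`, via the product formula
`∏ i < k, (q^(n-i) - 1)/(q^(k-i) - 1)` (the division is exact for `q ≥ 2`, `k ≤ n`). -/
def gaussBinom (q n k : ℕ) : ℕ :=
  (∏ i ∈ Finset.range k, (q ^ (n - i) - 1)) / (∏ i ∈ Finset.range k, (q ^ (k - i) - 1))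


/-- Weierstrass product inequality. -/
lemma weier (s : Finset ℕ) (f : ℕ → ℚ) (h0 : ∀ i ∈ s, 0 ≤ f i) (h1 : ∀ i ∈ s, f i ≤ 1) :
    1 - ∑ i ∈ s, f i ≤ ∏ i ∈ s, (1 - f i) := by
  induction s using Finset.cons_induction with
  | empty => simp
  | cons a s ha ih =>
    rw [Finset.prod_cons, Finset.sum_cons]
    have h0a := h0 a (Finset.mem_cons_self a s)
    have h1a := h1 a (Finset.mem_cons_self a s)
    have hS : 0 ≤ ∑ i ∈ s, f i :=
      Finset.sum_nonneg fun i hi => h0 i (Finset.mem_cons_of_mem hi)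
    have ih' := ih (fun i hi => h0 i (Finset.mem_cons_of_mem hi))
      (fun i hi => h1 i (Finset.mem_cons_of_mem hi))
    nlinarith [ih']

lemma geo_eq (Q : ℚ) (hQ : 2 ≤ Q) (k : ℕ) :
    ∑ i ∈ Finset.range k, (1/Q)^(i+1) = (1 - (1/Q)^k)/(Q-1) := by
  have hQ0 : Q ≠ 0 := by intro h; rw [h] at hQ; norm_num at hQ
  have h2 : Q - 1 ≠ 0 := by intro h; rw [sub_eq_zero] at h; subst h; norm_num at hQ
  induction k with
  | zero => simp
  | succ k ih =>
    rw [Finset.sum_range_succ, ih]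
    rw [pow_succ]
    field_simp
    ring

lemma geo (Q : ℚ) (hQ : 2 ≤ Q) (k : ℕ) :
    ∑ i ∈ Finset.range k, (1/Q)^(i+1) ≤ 1/(Q-1) := by
  rw [geo_eq Q hQ k]
  have hk0 : (0:ℚ) ≤ (1/Q)^k := by positivity
  gcongr
  · linarith
  · linarith

lemma prodR_ge_general (Q : ℚ) (hQ : 2 ≤ Q) (k : ℕ) :
    1 - 1/(Q-1) ≤ ∏ i ∈ Finset.range k, (1 - (1/Q)^(i+1)) := by
  have hQ0 : 0 < Q := by linarith
  have h := weier (Finset.range k) (fun i => (1/Q)^(i+1))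
    (fun i _ => by positivity)
    (fun i _ => by
      have : (1/Q : ℚ) ≤ 1 := by rw [div_le_one hQ0]; linarith
      exact pow_le_one₀ (by positivity) this)
  calc 1 - 1/(Q-1) ≤ 1 - ∑ i ∈ Finset.range k, (1/Q)^(i+1) := by
        linarith [geo Q hQ k]
    _ ≤ _ := h

lemma prodR_ge3 (Q : ℚ) (hQ : 3 ≤ Q) (k : ℕ) :
    (1:ℚ)/2 ≤ ∏ i ∈ Finset.range k, (1 - (1/Q)^(i+1)) := by
  have h := prodR_ge_general Q (by linarith) k
  have : 1/(Q-1) ≤ (1:ℚ)/2 := one_div_le_one_div_of_le (by norm_num) (by linarith)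
  linarith

lemma prodR_ge2 (k : ℕ) :
    (2:ℚ)/7 ≤ ∏ i ∈ Finset.range k, (1 - (1/2:ℚ)^(i+1)) := by
  rcases le_or_gt k 3 with hk | hk
  · interval_cases k <;> norm_num [Finset.prod_range_succ]
  · obtain ⟨m, rfl⟩ : ∃ m, k = 3 + m := ⟨k - 3, by omega⟩
    rw [Finset.prod_range_add]
    have h3 : (∏ i ∈ Finset.range 3, (1 - (1/2:ℚ)^(i+1))) = 21/64 := by
      norm_num [Finset.prod_range_succ]
    rw [h3]
    have htail : (7:ℚ)/8 ≤ ∏ i ∈ Finset.range m, (1 - (1/2:ℚ)^(3+i+1)) := by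
      have h := weier (Finset.range m) (fun i => (1/2:ℚ)^(3+i+1))
        (fun i _ => by positivity)
        (fun i _ => pow_le_one₀ (by norm_num) (by norm_num))
      have hsum : ∑ i ∈ Finset.range m, (1/2:ℚ)^(3+i+1) ≤ 1/8 := by
        have e : ∀ i, ((1:ℚ)/2)^(3+i+1) = (1/8) * (1/2)^(i+1) := by
          intro i; rw [show 3+i+1 = 3 + (i+1) by ring, pow_add]; norm_num
        rw [Finset.sum_congr rfl (fun i _ => e i), ← Finset.mul_sum]
        have := geo 2 (by norm_num) m
        norm_num at this ⊢
        linarith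
      linarith
    have hP : (0:ℚ) ≤ ∏ i ∈ Finset.range m, (1 - (1/2:ℚ)^(3+i+1)) := by linarith
    nlinarith [htail]

lemma gauss_le (q n k : ℕ) (hq : 2 ≤ q) (hkn : k ≤ n) (c : ℚ) (hc0 : 0 < c)
    (hR : c ≤ ∏ i ∈ Finset.range k, (1 - (1/(q:ℚ))^(i+1))) :
    (gaussBinom q n k : ℚ) ≤ c⁻¹ * (q : ℚ) ^ (k * (n - k)) := by
  set Q : ℚ := (q : ℚ) with hQdef
  have hQ2 : (2:ℚ) ≤ Q := by rw [hQdef]; exact_mod_cast hq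
  have hQ1 : (1:ℚ) < Q := by linarith
  have hQ0 : (0:ℚ) < Q := by linarith
  have hq0 : 0 < q := by omega
  -- cast the numerator and denominator
  have hA : ((∏ i ∈ Finset.range k, (q ^ (n - i) - 1) : ℕ) : ℚ)
      = ∏ i ∈ Finset.range k, (Q ^ (n - i) - 1) := by
    rw [Nat.cast_prod]
    refine Finset.prod_congr rfl fun i _ => ?_
    have h1 : 1 ≤ q ^ (n - i) := Nat.one_le_pow _ _ hq0
    push_cast [h1]
    ring
  have hB : ((∏ i ∈ Finset.range k, (q ^ (k - i) - 1) : ℕ) : ℚ)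
      = ∏ i ∈ Finset.range k, (Q ^ (k - i) - 1) := by
    rw [Nat.cast_prod]
    refine Finset.prod_congr rfl fun i _ => ?_
    have h1 : 1 ≤ q ^ (k - i) := Nat.one_le_pow _ _ hq0
    push_cast [h1]
    ring
  have step1 : (gaussBinom q n k : ℚ)
      ≤ (∏ i ∈ Finset.range k, (Q ^ (n - i) - 1)) / (∏ i ∈ Finset.range k, (Q ^ (k - i) - 1)) := by
    rw [← hA, ← hB]; exact Nat.cast_div_le
  rw [← Finset.prod_div_distrib] at step1
  -- termwise bound
  have hterm : ∀ i ∈ Finset.range k,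
      (Q ^ (n - i) - 1) / (Q ^ (k - i) - 1) ≤ Q ^ (n - k) / (1 - (1/Q)^(k - i)) := by
    intro i hi
    rw [Finset.mem_range] at hi
    have hki : 1 ≤ k - i := by omega
    have hd0 : (1:ℚ) < Q ^ (k - i) := one_lt_pow₀ hQ1 (by omega)
    have hd0' : (0:ℚ) < Q ^ (k - i) - 1 := by linarith
    have hrw : Q ^ (n - k) / (1 - (1/Q)^(k - i)) = Q ^ (n - i) / (Q ^ (k - i) - 1) := by
      have hne : Q ^ (k - i) ≠ 0 := by positivity
      have e1 : (1:ℚ) - (1/Q)^(k-i) = (Q ^ (k-i) - 1) / Q ^ (k-i) := by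
        field_simp
        rw [sub_mul, one_mul, one_div_pow, one_div_mul_cancel hne]
      rw [e1, div_div_eq_mul_div, ← pow_add,
        show n - k + (k - i) = n - i from by omega]
    rw [hrw]
    gcongr <;> linarith
  -- combine
  have step2 : ∏ x ∈ Finset.range k, (Q ^ (n - x) - 1) / (Q ^ (k - x) - 1)
      ≤ ∏ i ∈ Finset.range k, Q ^ (n - k) / (1 - (1/Q)^(k - i)) := by
    refine Finset.prod_le_prod (fun i hi => ?_) hterm
    rw [Finset.mem_range] at hi
    have hd0 : (1:ℚ) < Q ^ (k - i) := one_lt_pow₀ hQ1 (by omega)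
    have hn0 : (1:ℚ) ≤ Q ^ (n - i) := one_le_pow₀ (le_of_lt hQ1)
    exact div_nonneg (by linarith) (by linarith)
  have hrefl : ∏ i ∈ Finset.range k, (1 - (1/Q)^(k - i))
      = ∏ i ∈ Finset.range k, (1 - (1/Q)^(i+1)) := by
    rw [← Finset.prod_range_reflect (fun j => 1 - (1/Q)^(j+1)) k]
    refine Finset.prod_congr rfl fun i hi => ?_
    rw [Finset.mem_range] at hi
    congr 2
    omega
  have step3 : ∏ i ∈ Finset.range k, Q ^ (n - k) / (1 - (1/Q)^(k - i))
      = Q ^ (k * (n - k)) / ∏ i ∈ Finset.range k, (1 - (1/Q)^(i+1)) := by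
    rw [Finset.prod_div_distrib, hrefl, Finset.prod_const, ← pow_mul, Finset.card_range, Nat.mul_comm]
  have hRpos : (0:ℚ) < ∏ i ∈ Finset.range k, (1 - (1/Q)^(i+1)) := lt_of_lt_of_le hc0 hR
  have step4 : Q ^ (k * (n - k)) / ∏ i ∈ Finset.range k, (1 - (1/Q)^(i+1))
      ≤ Q ^ (k * (n - k)) / c := by
    gcongr
  calc (gaussBinom q n k : ℚ)
      ≤ ∏ x ∈ Finset.range k, (Q ^ (n - x) - 1) / (Q ^ (k - x) - 1) := step1
    _ ≤ ∏ i ∈ Finset.range k, Q ^ (n - k) / (1 - (1/Q)^(k - i)) := step2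
    _ = Q ^ (k * (n - k)) / ∏ i ∈ Finset.range k, (1 - (1/Q)^(i+1)) := step3
    _ ≤ Q ^ (k * (n - k)) / c := step4
    _ = c⁻¹ * Q ^ (k * (n - k)) := by rw [div_eq_mul_inv, mul_comm]

theorem stmt_4 (q n k : ℕ) (hq : 2 ≤ q) (hkn : k ≤ n) :
    (gaussBinom q n k : ℚ) ≤ 7 / 2 * (q : ℚ) ^ (k * (n - k)) ∧
      (3 ≤ q → (gaussBinom q n k : ℚ) ≤ 2 * (q : ℚ) ^ (k * (n - k))) := by
  have h2 : 3 ≤ q → (gaussBinom q n k : ℚ) ≤ 2 * (q : ℚ) ^ (k * (n - k)) := by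
    intro h3
    have hR := prodR_ge3 (q:ℚ) (by exact_mod_cast h3) k
    have h := gauss_le q n k hq hkn (1/2) (by norm_num) hR
    norm_num at h
    convert h using 2
  refine ⟨?_, h2⟩
  rcases eq_or_lt_of_le hq with h | h
  · obtain rfl : q = 2 := h.symm
    have hR := prodR_ge2 k
    have h' : (2:ℚ)/7 ≤ ∏ i ∈ Finset.range k, (1 - (1/((2:ℕ):ℚ))^(i+1)) := by
      convert hR using 3
      norm_num
    have h := gauss_le 2 n k le_rfl hkn (2/7) (by norm_num) h'
    have e : ((2:ℚ)/7)⁻¹ = 7/2 := by norm_num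
    rw [e] at h
    exact h
  · have h3 : 3 ≤ q := h
    have := h2 h3
    have pownn : (0:ℚ) ≤ (q:ℚ)^(k*(n-k)) := by positivity
    linarith
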